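/- arXiv:2108.04386 — 2 statements merged into one kernel-verified Lean document; each statement's English description precedes it below -/
import Mathlib

section
/- (Gluing Lemma, evenness part) Let L₁, L₂ be even lattices with an isometry ψ̄ : (D(L₁), q̄₁) → (D(L₂), q̄₂) of their discriminant quadratic forms. Then the lattice Γ := {(x,y) ∈ L₁∨ ⊕ L₂∨ : ψ̄([x]) = [y]} equipped with the quadratic form q(x,y) := −q₁(x) + q₂(y) is even. -/
/-- The dual lattice of `L` inside the `ℚ`-span of `L`, as a set. -/
def dualSet {V : Type*} [AddCommGroup V] [Module ℚ V]
    (B : V →ₗ[ℚ] V →ₗ[ℚ] ℚ) (L : Submodule ℤ V) : Set V :=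
  {v | v ∈ Submodule.span ℚ (L : Set V) ∧ ∀ x ∈ L, ∃ n : ℤ, B v x = (n : ℚ)}

/-- Gluing Lemma, evenness part: the glued lattice
`Γ = {(x,y) ∈ L₁∨ ⊕ L₂∨ : ψ̄([x]) = [y]}` with form `q(x,y) = -q₁(x) + q₂(y)` is even.
The isometry `ψ̄ : D(L₁) → D(L₂)` of discriminant forms is encoded by a map `ψ` on dual
vectors which descends to a group isomorphism of the discriminant groups preserving the
discriminant quadratic forms. -/
theorem stmt_4 (V₁ V₂ : Type*) [AddCommGroup V₁] [Module ℚ V₁]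
    [AddCommGroup V₂] [Module ℚ V₂]
    (B₁ : V₁ →ₗ[ℚ] V₁ →ₗ[ℚ] ℚ) (B₂ : V₂ →ₗ[ℚ] V₂ →ₗ[ℚ] ℚ)
    (hsym₁ : ∀ x y, B₁ x y = B₁ y x) (hsym₂ : ∀ x y, B₂ x y = B₂ y x)
    (L₁ : Submodule ℤ V₁) (L₂ : Submodule ℤ V₂)
    (hint₁ : ∀ x ∈ L₁, ∀ y ∈ L₁, ∃ n : ℤ, B₁ x y = (n : ℚ))
    (hint₂ : ∀ x ∈ L₂, ∀ y ∈ L₂, ∃ n : ℤ, B₂ x y = (n : ℚ))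
    (heven₁ : ∀ x ∈ L₁, ∃ n : ℤ, B₁ x x = 2 * (n : ℚ))
    (heven₂ : ∀ x ∈ L₂, ∃ n : ℤ, B₂ x x = 2 * (n : ℚ))
    (ψ : V₁ → V₂)
    (hψmap : ∀ v ∈ dualSet B₁ L₁, ψ v ∈ dualSet B₂ L₂)
    (hψadd : ∀ v ∈ dualSet B₁ L₁, ∀ w ∈ dualSet B₁ L₁, ψ (v + w) - ψ v - ψ w ∈ L₂)
    (hψinj : ∀ v ∈ dualSet B₁ L₁, (ψ v ∈ L₂ ↔ v ∈ L₁))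
    (hψsurj : ∀ w ∈ dualSet B₂ L₂, ∃ v ∈ dualSet B₁ L₁, ψ v - w ∈ L₂)
    (hψq : ∀ v ∈ dualSet B₁ L₁, ∃ n : ℤ, B₂ (ψ v) (ψ v) - B₁ v v = 2 * (n : ℚ)) :
    ∀ x ∈ dualSet B₁ L₁, ∀ y ∈ dualSet B₂ L₂, ψ x - y ∈ L₂ →
      ∃ n : ℤ, -B₁ x x + B₂ y y = 2 * (n : ℚ) := by
  intro x hx y hy hl
  obtain ⟨n, hn⟩ := hψq x hx
  obtain ⟨m, hm⟩ := (hψmap x hx).2 _ hl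
  obtain ⟨k, hk⟩ := heven₂ _ hl
  refine ⟨n - m + k, ?_⟩
  have hy' : y = ψ x - (ψ x - y) := (sub_sub_cancel _ _).symm
  have hsym : B₂ (ψ x - y) (ψ x) = B₂ (ψ x) (ψ x - y) := hsym₂ _ _
  rw [hy']
  simp only [map_sub, LinearMap.sub_apply] at *
  push_cast
  linarith
end

section
/- If L is an even positive definite lattice of rank d that embeds primitively into the E₈ root lattice, and the discriminant group D(L) requires a minimum of ℓ generators, then 8 − d ≥ ℓ. -/
/-- `S` is a generating set for the discriminant group `D(L) = L∨/L`. -/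
def GeneratesDisc {V : Type*} [AddCommGroup V] [Module ℚ V]
    (B : V →ₗ[ℚ] V →ₗ[ℚ] ℚ) (L : Submodule ℤ V) (S : Finset V) : Prop :=
  (S : Set V) ⊆ dualSet B L ∧
    ∀ v ∈ dualSet B L, ∃ c : V → ℤ, v - (∑ r ∈ S, c r • r) ∈ L

/-- Every element of a `ℤ`-submodule lies in the `ℚ`-span of (the image in `V` of) any
`ℤ`-basis of that submodule. -/
lemma subset_span_val {V : Type*} [AddCommGroup V] [Module ℚ V] (P : Submodule ℤ V)
    {ι : Type*} (b : Module.Basis ι ℤ P) :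
    (P : Set V) ⊆ ↑(Submodule.span ℚ (Set.range fun i => (b i : V))) := by
  intro x hx
  have h1 : (⟨x, hx⟩ : P) ∈ Submodule.span ℤ (Set.range b) := by
    rw [b.span_eq]; trivial
  have h2 : x ∈ Submodule.map P.subtype (Submodule.span ℤ (Set.range b)) := ⟨_, h1, rfl⟩
  rw [Submodule.map_span] at h2
  have h3 : P.subtype '' Set.range b = Set.range fun i => (b i : V) := by
    rw [← Set.range_comp]; rfl
  rw [h3] at h2
  exact Submodule.span_subset_span ℤ ℚ _ h2

/-- Nikulin (special case of Theorem 1.12.2): if an even positive definite lattice `L`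
of rank `d` embeds primitively into `E₈` (the unique even unimodular positive definite
lattice of rank `8`), and `D(L)` requires a minimum of `ℓ` generators, then `8 - d ≥ ℓ`. -/
theorem stmt_14 (V : Type*) [AddCommGroup V] [Module ℚ V] [FiniteDimensional ℚ V]
    (hdim : Module.finrank ℚ V = 8)
    (B : V →ₗ[ℚ] V →ₗ[ℚ] ℚ) (hsym : ∀ x y, B x y = B y x)
    (hpos : ∀ v : V, v ≠ 0 → 0 < B v v)
    (Λ : Submodule ℤ V) (hspan : Submodule.span ℚ (Λ : Set V) = ⊤)
    (hintΛ : ∀ x ∈ Λ, ∀ y ∈ Λ, ∃ n : ℤ, B x y = (n : ℚ))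
    (hevenΛ : ∀ x ∈ Λ, ∃ n : ℤ, B x x = 2 * (n : ℚ))
    (hunimod : dualSet B Λ = (Λ : Set V))
    (L : Submodule ℤ V) (hLΛ : L ≤ Λ)
    (hprim : ∀ x ∈ Λ, ∀ n : ℤ, n ≠ 0 → n • x ∈ L → x ∈ L)
    (d : ℕ) (hrank : Module.finrank ℚ (Submodule.span ℚ (L : Set V)) = d)
    (ℓ : ℕ)
    (hℓex : ∃ S : Finset V, GeneratesDisc B L S ∧ S.card = ℓ)
    (hℓmin : ∀ S : Finset V, GeneratesDisc B L S → ℓ ≤ S.card) :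
    ℓ ≤ 8 - d := by
  classical
  set W : Submodule ℚ V := Submodule.span ℚ (L : Set V) with hW
  have hzero : ∀ v : V, B v v = 0 → v = 0 := by
    intro v hv
    by_contra h
    exact absurd hv (ne_of_gt (hpos v h))
  have hval : ∀ x ∈ Λ, ∀ y ∈ Λ, B x y = ((B x y).num : ℚ) := by
    intro x hx y hy
    obtain ⟨m, hm⟩ := hintΛ x hx y hy
    rw [hm, Rat.num_intCast]
  -- a finite `ℚ`-spanning, linearly independent subset of `Λ`
  obtain ⟨t, htΛ, htspan, htli⟩ := exists_linearIndependent ℚ (Λ : Set V)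
  have htfin : t.Finite := htli.set_finite_of_isNoetherian
  haveI : Fintype t := htfin.fintype
  -- an integer-valued injective linear map `Λ → ℤ^t`
  let φ : Λ →ₗ[ℤ] (t → ℤ) := AddMonoidHom.toIntLinearMap
    { toFun := fun x y => (B x.1 y.1).num
      map_zero' := by funext y; simp
      map_add' := by
        intro x y
        funext z
        have h1 := hval x.1 x.2 z.1 (htΛ z.2)
        have h2 := hval y.1 y.2 z.1 (htΛ z.2)
        have h3 : B ((x + y : Λ) : V) z.1 = (((B x.1 z.1).num + (B y.1 z.1).num : ℤ) : ℚ) := by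
          push_cast
          rw [← h1, ← h2]
          rw [map_add, LinearMap.add_apply]
        show (B ((x + y : Λ) : V) z.1).num = (B (x.1 : V) z.1).num + (B (y.1 : V) z.1).num
        rw [h3, Rat.num_intCast] }
  have hφinj : Function.Injective φ := by
    intro x y hxy
    have hsub : φ (x - y) = 0 := by rw [map_sub, hxy, sub_self]
    have hz : ∀ w ∈ t, B ((x - y : Λ) : V) w = 0 := by
      intro w hw
      have h0 := congrFun hsub (⟨w, hw⟩ : t)
      have hv := hval ((x - y : Λ) : V) (x - y : Λ).2 w (htΛ hw)
      rw [hv]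
      exact_mod_cast h0
    have hker : Submodule.span ℚ t ≤ LinearMap.ker (B ((x - y : Λ) : V)) := by
      rw [Submodule.span_le]
      intro w hw
      simpa [LinearMap.mem_ker] using hz w hw
    have hmem : ((x - y : Λ) : V) ∈ Submodule.span ℚ t := by
      rw [htspan, hspan]; trivial
    have h00 : B ((x - y : Λ) : V) ((x - y : Λ) : V) = 0 := by
      simpa [LinearMap.mem_ker] using hker hmem
    have := hzero _ h00
    have hz0 : (x - y : Λ) = 0 := Subtype.ext (by simpa using this)
    exact sub_eq_zero.mp hz0
  -- a finite `ℤ`-basis for `Λ`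
  obtain ⟨nΛ, bR⟩ := Submodule.basisOfPid (Pi.basisFun ℤ t) (LinearMap.range φ)
  let eΛ : Λ ≃ₗ[ℤ] LinearMap.range φ := LinearEquiv.ofInjective φ hφinj
  let bΛ : Module.Basis (Fin nΛ) ℤ Λ := bR.map eΛ.symm
  -- Smith normal form for `L` inside `Λ`
  obtain ⟨n, snf⟩ := Submodule.smithNormalForm bΛ (L.comap Λ.subtype)
  let e : Fin nΛ → V := fun j => ((snf.bM j : Λ) : V)
  have heΛ : ∀ j, e j ∈ Λ := fun j => (snf.bM j).2
  -- `e` is a `ℚ`-basis of `V`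
  have heli : LinearIndependent ℚ e := by
    have h1 : LinearIndependent ℤ e :=
      snf.bM.linearIndependent.map' Λ.subtype (Submodule.ker_subtype Λ)
    exact (LinearIndependent.iff_fractionRing ℤ ℚ).mp h1
  have hespan : Submodule.span ℚ (Set.range e) = ⊤ := by
    rw [eq_top_iff, ← hspan, Submodule.span_le]
    exact fun x hx => subset_span_val Λ snf.bM hx
  let bV : Module.Basis (Fin nΛ) ℚ V := Module.Basis.mk heli hespan.ge
  have hnΛ : nΛ = 8 := by
    have h1 := Module.finrank_eq_card_basis bV
    rw [hdim, Fintype.card_fin] at h1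
    omega
  -- the basis of `L`, pushed to `V`
  let bL : Module.Basis (Fin n) ℤ L := snf.bN.map (Submodule.comapSubtypeEquivOfLe hLΛ)
  let eL : Fin n → V := fun i => ((bL i : L) : V)
  have heLval : ∀ i, eL i = ((snf.bN i : Λ) : V) := by
    intro i
    simp only [eL, bL, Module.Basis.map_apply, Submodule.comapSubtypeEquivOfLe_apply_coe]
  have heLmem : ∀ i, eL i ∈ L := fun i => (bL i).2
  have heLli : LinearIndependent ℚ eL := by
    have h1 : LinearIndependent ℤ eL :=
      bL.linearIndependent.map' L.subtype (Submodule.ker_subtype L)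
    exact (LinearIndependent.iff_fractionRing ℤ ℚ).mp h1
  have heLspan : Submodule.span ℚ (Set.range eL) = W := by
    apply le_antisymm
    · rw [Submodule.span_le]
      rintro v ⟨i, rfl⟩
      exact Submodule.subset_span (heLmem i)
    · rw [hW, Submodule.span_le]
      exact fun x hx => subset_span_val L bL hx
  have hn : n = d := by
    have h1 : Module.finrank ℚ (Submodule.span ℚ (Set.range eL)) = n := by
      rw [finrank_span_eq_card heLli, Fintype.card_fin]
    rw [heLspan] at h1
    rw [← h1, ← hrank]
  -- relation between bases, and primitivity
  have hvsnf : ∀ i, eL i = snf.a i • e (snf.f i) := by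
    intro i
    rw [heLval i]
    have h1 := congrArg (fun z : Λ => (z : V)) (snf.snf i)
    simpa using h1
  have hane : ∀ i, snf.a i ≠ 0 := by
    intro i h
    apply heLli.ne_zero i
    rw [hvsnf i, h, zero_smul]
  have hfmem : ∀ i, e (snf.f i) ∈ L := by
    intro i
    refine hprim (e (snf.f i)) (heΛ _) (snf.a i) (hane i) ?_
    rw [← hvsnf i]
    exact heLmem i
  have hWle : W ≤ Submodule.span ℚ (Set.range fun i => e (snf.f i)) := by
    rw [← heLspan, Submodule.span_le]
    rintro v ⟨i, rfl⟩
    rw [hvsnf i, ← Int.cast_smul_eq_zsmul ℚ]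
    exact Submodule.smul_mem _ _ (Submodule.subset_span ⟨i, rfl⟩)
  -- orthogonal projection onto `W`
  have hproj : ∀ w : V, ∃ p, p ∈ W ∧ ∀ y ∈ W, B p y = B w y := by
    intro w
    let T : W →ₗ[ℚ] Module.Dual ℚ W := B.domRestrict₁₂ W W
    have hTinj : Function.Injective T := by
      intro p q h
      have h0 : T (p - q) = 0 := by rw [map_sub, h, sub_self]
      have h1 : B ((p - q : W) : V) ((p - q : W) : V) = 0 := LinearMap.congr_fun h0 (p - q)
      have h2 := hzero _ h1
      exact sub_eq_zero.mp (Subtype.ext (by simpa using h2))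
    have hTsurj : Function.Surjective T :=
      (LinearMap.injective_iff_surjective_of_finrank_eq_finrank
        (Subspace.dual_finrank_eq).symm).mp hTinj
    obtain ⟨p, hp⟩ := hTsurj ((B w).domRestrict W)
    refine ⟨p.1, p.2, fun y hy => ?_⟩
    exact LinearMap.congr_fun hp ⟨y, hy⟩
  choose p hpW hpB using hproj
  -- surjectivity of `B : V → V*`
  have hBsurj : ∀ g : V →ₗ[ℚ] ℚ, ∃ w : V, B w = g := by
    have hinj : Function.Injective B := by
      intro x y h
      have h00 : B (x - y) = 0 := by rw [map_sub, h, sub_self]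
      have h0 : B (x - y) (x - y) = 0 := by rw [h00]; rfl
      exact sub_eq_zero.mp (hzero _ h0)
    exact (LinearMap.injective_iff_surjective_of_finrank_eq_finrank
      (Subspace.dual_finrank_eq).symm).mp hinj
  -- representation of elements of `Λ` in the basis
  have hrepr : ∀ (x : V) (hx : x ∈ Λ), x = ∑ j, (snf.bM.repr ⟨x, hx⟩ j) • e j := by
    intro x hx
    have h1 := snf.bM.sum_repr ⟨x, hx⟩
    have h2 := congrArg (fun z : Λ => (z : V)) h1
    simp only [Submodule.coe_sum, SetLike.val_smul] at h2
    exact h2.symm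
  -- index sets
  let J : Finset (Fin nΛ) := (Finset.univ.map snf.f)ᶜ
  let q : Fin nΛ → V := fun j => p (e j)
  let S : Finset V := J.image q
  have hJcard : J.card = nΛ - n := by
    rw [Finset.card_compl, Finset.card_map, Finset.card_univ]
    simp
  have hScard : S.card ≤ 8 - d := by
    calc S.card ≤ J.card := Finset.card_image_le
    _ = nΛ - n := hJcard
    _ = 8 - d := by rw [hnΛ, hn]
  -- `S` consists of elements of the dual lattice
  have hSdual : (S : Set V) ⊆ dualSet B L := by
    intro r hr
    simp only [S, Finset.coe_image, Set.mem_image, Finset.mem_coe] at hr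
    obtain ⟨j, hj, rfl⟩ := hr
    refine ⟨by rw [← hW]; exact hpW (e j), fun x hx => ?_⟩
    rw [hpB (e j) x (by rw [hW]; exact Submodule.subset_span hx)]
    exact hintΛ _ (heΛ j) x (hLΛ hx)
  -- `S` generates the discriminant group
  have hgen : ∀ v ∈ dualSet B L, ∃ c : V → ℤ, v - (∑ r ∈ S, c r • r) ∈ L := by
    intro v hv
    obtain ⟨hvW, hvint⟩ := hv
    rw [← hW] at hvW
    have hvintL : ∀ j ∈ Set.range snf.f, B v (e j) = ((B v (e j)).num : ℚ) := by
      rintro j ⟨i, rfl⟩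
      obtain ⟨m, hm⟩ := hvint _ (hfmem i)
      rw [hm, Rat.num_intCast]
    -- the extended functional
    let coeffs : Fin nΛ → ℚ := fun j => if j ∈ Set.range snf.f then B v (e j) else 0
    let φv : V →ₗ[ℚ] ℚ := bV.constr ℚ coeffs
    have hφvb : ∀ j, φv (e j) = coeffs j := by
      intro j
      have h1 : bV j = e j := Module.Basis.mk_apply heli hespan.ge j
      rw [← h1]
      exact bV.constr_basis ℚ coeffs j
    obtain ⟨w, hwB⟩ := hBsurj φv
    -- `w` lies in `Λ` by unimodularity
    have hwΛ : w ∈ Λ := by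
      have hwdual : w ∈ dualSet B Λ := by
        refine ⟨by rw [hspan]; trivial, fun x hx => ?_⟩
        refine ⟨∑ j, (snf.bM.repr ⟨x, hx⟩ j) *
          (if j ∈ Set.range snf.f then (B v (e j)).num else 0), ?_⟩
        have h1 : B w x = φv x := by rw [hwB]
        rw [h1]
        conv_lhs => rw [hrepr x hx]
        rw [map_sum]
        push_cast
        refine Finset.sum_congr rfl fun j _ => ?_
        rw [map_zsmul, hφvb j]
        by_cases hj : j ∈ Set.range snf.f
        · simp only [coeffs, if_pos hj]
          rw [← hvintL j hj, zsmul_eq_mul]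
        · simp only [Set.mem_range] at hj
          simp only [coeffs, Set.mem_range, if_neg hj]
          simp
      rw [hunimod] at hwdual
      exact hwdual
    -- `B w` agrees with `B v` on `W`
    have hwv : ∀ y ∈ W, B w y = B v y := by
      have hker : Submodule.span ℚ (Set.range fun i => e (snf.f i))
          ≤ LinearMap.ker (B w - B v) := by
        rw [Submodule.span_le]
        rintro y ⟨i, rfl⟩
        simp only [SetLike.mem_coe, LinearMap.mem_ker, LinearMap.sub_apply]
        rw [hwB, hφvb]
        simp only [coeffs, if_pos (Set.mem_range_self i), sub_self]
      intro y hy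
      have h1 : (B w - B v) y = 0 := hker (hWle hy)
      rw [LinearMap.sub_apply] at h1
      linarith
    -- coefficients of `w`
    let c : Fin nΛ → ℤ := fun j => snf.bM.repr ⟨w, hwΛ⟩ j
    have hwrepr : w = ∑ j, c j • e j := hrepr w hwΛ
    have hsplit : w - ∑ j ∈ J, c j • e j ∈ L := by
      have h1 : w - ∑ j ∈ J, c j • e j = ∑ j ∈ Jᶜ, c j • e j := by
        rw [eq_sub_iff_add_eq.mpr (Finset.sum_add_sum_compl J (fun j => c j • e j))]
        rw [← hwrepr]
        abel
      rw [h1]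
      refine Submodule.sum_mem L fun j hj => ?_
      rw [show Jᶜ = Finset.univ.map snf.f from compl_compl _] at hj
      obtain ⟨i, -, rfl⟩ := Finset.mem_map.mp hj
      exact Submodule.smul_mem L _ (hfmem i)
    -- the key identity
    have hkey : v - ∑ j ∈ J, c j • q j = w - ∑ j ∈ J, c j • e j := by
      set u := (v - ∑ j ∈ J, c j • q j) - (w - ∑ j ∈ J, c j • e j) with hu
      have huW : u ∈ W := by
        refine Submodule.sub_mem W (Submodule.sub_mem W hvW ?_) ?_
        · refine Submodule.sum_mem W fun j _ => ?_
          rw [← Int.cast_smul_eq_zsmul ℚ]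
          exact Submodule.smul_mem W _ (hpW (e j))
        · rw [hW]
          exact Submodule.subset_span hsplit
      have hBzero : ∀ y ∈ W, B u y = 0 := by
        intro y hy
        have hGdef : ∀ z : V, B z y = (B.flip y) z := fun z => rfl
        rw [hGdef, hu, map_sub, map_sub, map_sub, map_sum, map_sum]
        simp only [map_zsmul]
        have e3 : ∑ j ∈ J, c j • (B.flip y) (q j) = ∑ j ∈ J, c j • (B.flip y) (e j) :=
          Finset.sum_congr rfl fun j _ => by
            rw [show (B.flip y) (q j) = (B.flip y) (e j) from hpB (e j) y hy]
        have e2 : (B.flip y) w = (B.flip y) v := hwv y hy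
        rw [e3, e2]
        ring
      have h0 : u = 0 := hzero u (hBzero u huW)
      exact sub_eq_zero.mp h0
    -- assemble the coefficient function
    refine ⟨fun r => ∑ j ∈ J.filter (fun j => q j = r), c j, ?_⟩
    have hsum : ∑ r ∈ S, (∑ j ∈ J.filter (fun j => q j = r), c j) • r
        = ∑ j ∈ J, c j • q j := by
      have h1 : ∀ r ∈ S, (∑ j ∈ J.filter (fun j => q j = r), c j) • r
          = ∑ j ∈ J.filter (fun j => q j = r), c j • q j := by
        intro r hr
        rw [Finset.sum_smul]
        refine Finset.sum_congr rfl fun j hj => ?_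
        rw [(Finset.mem_filter.mp hj).2]
      rw [Finset.sum_congr rfl h1]
      exact Finset.sum_fiberwise_of_maps_to (fun j hj => Finset.mem_image_of_mem q hj) _
    rw [hsum, hkey]
    exact hsplit
  exact (hℓmin S ⟨hSdual, hgen⟩).trans hScard
end
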